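/- If F : L_n → ΔK is a non-degenerate 2-filtration and a,d,e,h are as in the two-square setup with adeh defined as the 1-dimensional Möbius inversion along a path through a ≤ d ≤ e ≤ h, then adeh ∈ {0, 1, 2}. -/

import Mathlib

noncomputable section
open scoped Classical

variable {V : Type*} [DecidableEq V] [Fintype V]

/-- A finite abstract simplicial complex on vertex set `V`:
a collection of nonempty finite sets closed under taking nonempty subsets. -/
def IsComplex (K : Finset (Finset V)) : Prop :=
  ∀ s ∈ K, s ≠ ∅ ∧ ∀ t : Finset V, t ⊆ s → t ≠ ∅ → t ∈ K

/-- The space of simplicial chains (all dimensions together) with `ZMod 2` coefficients. -/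
abbrev Chn (V : Type*) := Finset V →₀ ZMod 2

/-- The simplicial boundary operator (mod 2). -/
def bdry (V : Type*) [DecidableEq V] : Chn V →ₗ[ZMod 2] Chn V :=
  Finsupp.lsum (ZMod 2) fun s =>
    LinearMap.toSpanSingleton (ZMod 2) (Chn V) (∑ v ∈ s, Finsupp.single (s.erase v) 1)

/-- The subspace of `d`-chains supported on a complex `L`. -/
def chainsOf (d : ℕ) (L : Finset (Finset V)) : Submodule (ZMod 2) (Chn V) :=
  Submodule.span (ZMod 2)
    ((fun s => Finsupp.single s (1 : ZMod 2)) '' {s : Finset V | s ∈ L ∧ s.card = d + 1})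

/-- The subspace `Z_d L` of `d`-cycles of the complex `L`. -/
def cyclesOf (d : ℕ) (L : Finset (Finset V)) : Submodule (ZMod 2) (Chn V) :=
  chainsOf d L ⊓ LinearMap.ker (bdry V)

/-- The subspace `B_d L` of `d`-boundaries of the complex `L`. -/
def boundariesOf (d : ℕ) (L : Finset (Finset V)) : Submodule (ZMod 2) (Chn V) :=
  Submodule.map (bdry V) (chainsOf (d+1) L)

/-- The birth–death function of a 1-filtration indexed by `Fin (n+1)`:
`ZB_d F [a,b] = dim (Z_d F(a) ⊓ B_d F(b))` for `b ≠ ⊤`, and `dim Z_d F(a)` for `b = ⊤`. -/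
def ZBFin (d n : ℕ) (F : Fin (n+1) → Finset (Finset V)) (a b : Fin (n+1)) : ℤ :=
  if b = Fin.last n then (Module.finrank (ZMod 2) ↥(cyclesOf d (F a)) : ℤ)
  else (Module.finrank (ZMod 2) ↥(cyclesOf d (F a) ⊓ boundariesOf d (F b)) : ℤ)

/-- The birth–death function of a 2-filtration indexed by `Fin (n+1) × Fin (n+1)`. -/
def ZBFin2 (d n : ℕ) (F : Fin (n+1) × Fin (n+1) → Finset (Finset V))
    (a b : Fin (n+1) × Fin (n+1)) : ℤ :=
  if b = (Fin.last n, Fin.last n) then (Module.finrank (ZMod 2) ↥(cyclesOf d (F a)) : ℤ)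
  else (Module.finrank (ZMod 2) ↥(cyclesOf d (F a) ⊓ boundariesOf d (F b)) : ℤ)

/-- `W w x y z` is the 1-dimensional Möbius inversion `wxyz = xz − xy − wz + wy`
of the birth–death function along a path through grades `w ≤ x ≤ y ≤ z`. -/
def W (d n : ℕ) (F : Fin (n+1) × Fin (n+1) → Finset (Finset V))
    (w x y z : Fin (n+1) × Fin (n+1)) : ℤ :=
  ZBFin2 d n F x z - ZBFin2 d n F x y - ZBFin2 d n F w z + ZBFin2 d n F w y

/-- The value `Dgm F [d,h]` of the Möbius inversion of the birth–death function of a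
2-filtration at the interval `[d,h]`, written as the sixteen-term alternating sum over
the corners `a,b,c,d` of the lower unit square and `e,f,g,h` of the upper unit square. -/
def Dgm16 (d n : ℕ) (F : Fin (n+1) × Fin (n+1) → Finset (Finset V))
    (a b c dd e f g h : Fin (n+1) × Fin (n+1)) : ℤ :=
  (ZBFin2 d n F dd h - ZBFin2 d n F dd f - ZBFin2 d n F dd g + ZBFin2 d n F dd e)
  - (ZBFin2 d n F b h - ZBFin2 d n F b f - ZBFin2 d n F b g + ZBFin2 d n F b e)
  - (ZBFin2 d n F c h - ZBFin2 d n F c f - ZBFin2 d n F c g + ZBFin2 d n F c e)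
  + (ZBFin2 d n F a h - ZBFin2 d n F a f - ZBFin2 d n F a g + ZBFin2 d n F a e)

/-- A lower corner of the appearance curve of a simplex `σ` in a 2-filtration `F`:
a minimal grade at which `σ` is present. -/
def LowerCorner {n : ℕ} (F : Fin (n+1) × Fin (n+1) → Finset (Finset V))
    (σ : Finset V) (a : Fin (n+1) × Fin (n+1)) : Prop :=
  σ ∈ F a ∧ ∀ b : Fin (n+1) × Fin (n+1), b < a → σ ∉ F b

/-- A 2-filtration is non-degenerate if no two (distinct) lower corners of appearance
curves share a component of a grade. -/
def NonDeg {n : ℕ} (F : Fin (n+1) × Fin (n+1) → Finset (Finset V)) : Prop :=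
  ∀ (σ τ : Finset V) (a b : Fin (n+1) × Fin (n+1)),
    LowerCorner F σ a → LowerCorner F τ b → (σ ≠ τ ∨ a ≠ b) →
    a.1 ≠ b.1 ∧ a.2 ≠ b.2



set_option linter.unusedSectionVars false

open Module Submodule

lemma finrank_inf_ineq (Z Z' B B' : Submodule (ZMod 2) (Chn V)) (hZ : Z ≤ Z') (hB : B ≤ B') :
    finrank (ZMod 2) ↥(Z ⊓ B') + finrank (ZMod 2) ↥(Z' ⊓ B)
      ≤ finrank (ZMod 2) ↥(Z' ⊓ B') + finrank (ZMod 2) ↥(Z ⊓ B) := by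
  have h1 : (Z ⊓ B') ⊓ (Z' ⊓ B) = Z ⊓ B := by
    rw [inf_inf_inf_comm, inf_eq_left.mpr hZ, inf_eq_right.mpr hB]
  have h2 : (Z ⊓ B') ⊔ (Z' ⊓ B) ≤ Z' ⊓ B' :=
    sup_le (inf_le_inf hZ le_rfl) (inf_le_inf le_rfl hB)
  calc finrank (ZMod 2) ↥(Z ⊓ B') + finrank (ZMod 2) ↥(Z' ⊓ B)
      = finrank (ZMod 2) ↥((Z ⊓ B') ⊔ (Z' ⊓ B)) + finrank (ZMod 2) ↥((Z ⊓ B') ⊓ (Z' ⊓ B)) :=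
        (Submodule.finrank_sup_add_finrank_inf_eq _ _).symm
    _ = finrank (ZMod 2) ↥((Z ⊓ B') ⊔ (Z' ⊓ B)) + finrank (ZMod 2) ↥(Z ⊓ B) := by rw [h1]
    _ ≤ finrank (ZMod 2) ↥(Z' ⊓ B') + finrank (ZMod 2) ↥(Z ⊓ B) :=
        Nat.add_le_add_right (Submodule.finrank_mono h2) _

lemma chainsOf_mono (d : ℕ) {K L : Finset (Finset V)} (h : K ⊆ L) :
    chainsOf d K ≤ chainsOf d L :=
  Submodule.span_mono (Set.image_mono (fun s hs => ⟨h hs.1, hs.2⟩))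

lemma chains_finrank_le (d : ℕ) {K L : Finset (Finset V)} (hKL : K ⊆ L) :
    finrank (ZMod 2) ↥(chainsOf d L)
      ≤ finrank (ZMod 2) ↥(chainsOf d K) + (L \ K).card := by
  set f : Finset V → Chn V := fun s => Finsupp.single s (1 : ZMod 2) with hf
  set N : Submodule (ZMod 2) (Chn V) :=
    Submodule.span (ZMod 2) ↑((L \ K).image f) with hN
  have hle : chainsOf d L ≤ chainsOf d K ⊔ N := by
    rw [chainsOf]
    apply Submodule.span_le.mpr
    rintro _ ⟨s, ⟨hsL, hscard⟩, rfl⟩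
    by_cases hsK : s ∈ K
    · exact Submodule.mem_sup_left (Submodule.subset_span ⟨s, ⟨hsK, hscard⟩, rfl⟩)
    · refine Submodule.mem_sup_right (Submodule.subset_span ?_)
      rw [Finset.coe_image]
      exact ⟨s, by simp [hsL, hsK], rfl⟩
  have h1 : finrank (ZMod 2) ↥(chainsOf d L) ≤ finrank (ZMod 2) ↥(chainsOf d K ⊔ N) :=
    Submodule.finrank_mono hle
  have h2 : finrank (ZMod 2) ↥(chainsOf d K ⊔ N)
      ≤ finrank (ZMod 2) ↥(chainsOf d K) + finrank (ZMod 2) ↥N :=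
    Submodule.finrank_add_le_finrank_add_finrank _ _
  have h3 : finrank (ZMod 2) ↥N ≤ (L \ K).card := by
    refine le_trans (finrank_span_finset_le_card ((L \ K).image f)) ?_
    exact Finset.card_image_le
  omega

lemma exists_lowerCorner {n : ℕ} (F : Fin (n+1) × Fin (n+1) → Finset (Finset V))
    {σ : Finset V} {x : Fin (n+1) × Fin (n+1)} (hx : σ ∈ F x) :
    ∃ bb : Fin (n+1) × Fin (n+1), bb ≤ x ∧ LowerCorner F σ bb := by
  obtain ⟨bb, ⟨hbx, hbF⟩, hmin⟩ :=
    (Finite.to_wellFoundedLT (α := Fin (n+1) × Fin (n+1))).wf.has_min {y : Fin (n+1) × Fin (n+1) | y ≤ x ∧ σ ∈ F y} ⟨x, le_rfl, hx⟩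
  exact ⟨bb, hbx, hbF, fun y hy hyF => hmin y ⟨hy.le.trans hbx, hyF⟩ hy⟩

lemma new_card_le_two {n : ℕ} (F : Fin (n+1) × Fin (n+1) → Finset (Finset V))
    (hmono : Monotone F) (hnd : NonDeg F) {a dd : Fin (n+1) × Fin (n+1)}
    (ha1 : (a.1 : ℕ) + 1 = (dd.1 : ℕ)) (ha2 : (a.2 : ℕ) + 1 = (dd.2 : ℕ)) :
    (F dd \ F a).card ≤ 2 := by
  have key : ∀ σ ∈ F dd \ F a, ∃ bb : Fin (n+1) × Fin (n+1),
      LowerCorner F σ bb ∧ (bb.1 = dd.1 ∨ bb.2 = dd.2) := by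
    intro σ hσ
    rw [Finset.mem_sdiff] at hσ
    obtain ⟨bb, hbx, hc⟩ := exists_lowerCorner F hσ.1
    refine ⟨bb, hc, ?_⟩
    have hnle : ¬ bb ≤ a := fun hle => hσ.2 (hmono hle hc.1)
    rw [Prod.le_def, Fin.le_def, Fin.le_def] at hnle
    rw [Prod.le_def, Fin.le_def, Fin.le_def] at hbx
    rcases not_and_or.mp hnle with h | h
    · exact Or.inl (Fin.ext (by omega))
    · exact Or.inr (Fin.ext (by omega))
  choose! g hg1 hg2 using key
  have : (F dd \ F a).card ≤ (Finset.univ : Finset Bool).card := by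
    refine Finset.card_le_card_of_injOn (fun σ => decide ((g σ).1 = dd.1))
      (fun _ _ => Finset.mem_univ _) ?_
    intro σ hσ τ hτ heq
    by_contra hne
    simp only [Finset.mem_coe] at hσ hτ
    have h1 := hnd σ τ (g σ) (g τ) (hg1 σ hσ) (hg1 τ hτ) (Or.inl hne)
    by_cases hcase : (g σ).1 = dd.1
    · have : (g τ).1 = dd.1 := by
        have := heq
        simp [hcase] at this
        exact this
      exact h1.1 (hcase.trans this.symm)
    · have hσ2 : (g σ).2 = dd.2 := (hg2 σ hσ).resolve_left hcase
      have hτ1 : ¬ (g τ).1 = dd.1 := by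
        intro hh
        simp [hcase, hh] at heq
      have hτ2 : (g τ).2 = dd.2 := (hg2 τ hτ).resolve_left hτ1
      exact h1.2 (hσ2.trans hτ2.symm)
  simpa using this

lemma cycles_finrank_le (d : ℕ) {K L : Finset (Finset V)} (hKL : K ⊆ L)
    (hcard : (L \ K).card ≤ 2) :
    finrank (ZMod 2) ↥(cyclesOf d L) ≤ finrank (ZMod 2) ↥(cyclesOf d K) + 2 := by
  have h1 := finrank_inf_ineq (chainsOf d K) (chainsOf d L) (LinearMap.ker (bdry V)) ⊤
    (chainsOf_mono d hKL) le_top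
  rw [inf_top_eq, inf_top_eq] at h1
  have h2 := chains_finrank_le d hKL
  unfold cyclesOf
  omega

/-- For a non-degenerate 2-filtration, the 1-dimensional Möbius inversion `adeh` along a
path through the diagonals of the two unit squares takes only the values 0, 1 or 2. -/
theorem adeh_mem_zero_one_two (d n : ℕ)
    (F : Fin (n+1) × Fin (n+1) → Finset (Finset V))
    (hmono : Monotone F) (hcx : ∀ x, IsComplex (F x)) (hbot : F (0, 0) = ∅)
    (a b c dd e f g h : Fin (n+1) × Fin (n+1))
    (ha1 : (a.1 : ℕ) + 1 = (dd.1 : ℕ)) (ha2 : (a.2 : ℕ) + 1 = (dd.2 : ℕ))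
    (hb : b = (a.1, dd.2)) (hc : c = (dd.1, a.2))
    (he1 : (e.1 : ℕ) + 1 = (h.1 : ℕ)) (he2 : (e.2 : ℕ) + 1 = (h.2 : ℕ))
    (hf : f = (e.1, h.2)) (hgg : g = (h.1, e.2))
    (hde : dd ≤ e)
    (hnd : NonDeg F) :
    W d n F a dd e h = 0 ∨ W d n F a dd e h = 1 ∨ W d n F a dd e h = 2 := by
  have hadd : a ≤ dd := by
    rw [Prod.le_def, Fin.le_def, Fin.le_def]; omega
  have heh : e ≤ h := by
    rw [Prod.le_def, Fin.le_def, Fin.le_def]; omega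
  have hZa : cyclesOf d (F a) ≤ cyclesOf d (F dd) :=
    inf_le_inf (chainsOf_mono d (hmono hadd)) le_rfl
  have key4 : finrank (ZMod 2) ↥(cyclesOf d (F dd))
      ≤ finrank (ZMod 2) ↥(cyclesOf d (F a)) + 2 :=
    cycles_finrank_le d (hmono hadd) (new_card_le_two F hmono hnd ha1 ha2)
  have hene : e ≠ (Fin.last n, Fin.last n) := by
    intro hcontr
    have h1 : (e.1 : ℕ) = n := by rw [hcontr]; simp
    have h2 : (h.1 : ℕ) < n + 1 := h.1.isLt
    omega
  have key3 : finrank (ZMod 2) ↥(cyclesOf d (F a) ⊓ boundariesOf d (F e))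
      ≤ finrank (ZMod 2) ↥(cyclesOf d (F dd) ⊓ boundariesOf d (F e)) :=
    Submodule.finrank_mono (inf_le_inf hZa le_rfl)
  by_cases hh : h = (Fin.last n, Fin.last n)
  · have key1 := finrank_inf_ineq (cyclesOf d (F a)) (cyclesOf d (F dd))
      (boundariesOf d (F e)) ⊤ hZa le_top
    rw [inf_top_eq, inf_top_eq] at key1
    have e0 : W d n F a dd e h
        = (finrank (ZMod 2) ↥(cyclesOf d (F dd)) : ℤ)
          - finrank (ZMod 2) ↥(cyclesOf d (F dd) ⊓ boundariesOf d (F e))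
          - finrank (ZMod 2) ↥(cyclesOf d (F a))
          + finrank (ZMod 2) ↥(cyclesOf d (F a) ⊓ boundariesOf d (F e)) := by
      simp only [W, ZBFin2, if_pos hh, if_neg hene]
    rw [e0]
    omega
  · have hBeh : boundariesOf d (F e) ≤ boundariesOf d (F h) :=
      Submodule.map_mono (chainsOf_mono (d+1) (hmono heh))
    have key1 := finrank_inf_ineq (cyclesOf d (F a)) (cyclesOf d (F dd))
      (boundariesOf d (F e)) (boundariesOf d (F h)) hZa hBeh
    have key2 := finrank_inf_ineq (cyclesOf d (F a)) (cyclesOf d (F dd))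
      (boundariesOf d (F h)) ⊤ hZa le_top
    rw [inf_top_eq, inf_top_eq] at key2
    have e0 : W d n F a dd e h
        = (finrank (ZMod 2) ↥(cyclesOf d (F dd) ⊓ boundariesOf d (F h)) : ℤ)
          - finrank (ZMod 2) ↥(cyclesOf d (F dd) ⊓ boundariesOf d (F e))
          - finrank (ZMod 2) ↥(cyclesOf d (F a) ⊓ boundariesOf d (F h))
          + finrank (ZMod 2) ↥(cyclesOf d (F a) ⊓ boundariesOf d (F e)) := by
      simp only [W, ZBFin2, if_neg hh, if_neg hene]
    rw [e0]
    omega
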